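/- arXiv:2510.22307 — 2 statements merged into one kernel-verified Lean document; each statement's English description precedes it below -/
import Mathlib

section
/- Let d ≥ 2 and f, g : {0,1}^n → ℝ. For T = {i_1,…,i_d} ⊆ [n] with |T| = d write ∂_T f = ∂_{i_1} ∘ ⋯ ∘ ∂_{i_d}(f). Then ∑_{S ⊆ [n], |S| ≥ d} f̂(S)·ĝ(S) = (d/4^d)·∑_{T ⊆ [n], |T| = d} ∫_0^∞ (1 − e^{−t})^{d−1}·e^{−t}·E[∂_T f · P_t(∂_T g)] dt. -/
open Finset MeasureTheory

/-- Expectation with respect to the uniform measure on `{0,1}^n`. -/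
noncomputable def Ev (n : ℕ) (f : (Fin n → Bool) → ℝ) : ℝ :=
  (∑ x : Fin n → Bool, f x) / 2 ^ n

/-- `f` is increasing (monotone w.r.t. the coordinatewise order). -/
def Increasing' (n : ℕ) (f : (Fin n → Bool) → ℝ) : Prop :=
  ∀ x y : Fin n → Bool, (∀ i, x i ≤ y i) → f x ≤ f y

/-- `f` is submodular: `f(x∧y) + f(x∨y) ≤ f(x) + f(y)`. -/
def Submodular' (n : ℕ) (f : (Fin n → Bool) → ℝ) : Prop :=
  ∀ x y : Fin n → Bool,
    f (fun i => x i && y i) + f (fun i => x i || y i) ≤ f x + f y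

/-- `f` is supermodular: `f(x) + f(y) ≤ f(x∧y) + f(x∨y)`. -/
def Supermodular' (n : ℕ) (f : (Fin n → Bool) → ℝ) : Prop :=
  ∀ x y : Fin n → Bool,
    f x + f y ≤ f (fun i => x i && y i) + f (fun i => x i || y i)

/-- Discrete derivative `∂_i f (x) = f(x^{(i→1)}) - f(x^{(i→0)})`. -/
noncomputable def pD (n : ℕ) (i : Fin n) (f : (Fin n → Bool) → ℝ) :
    (Fin n → Bool) → ℝ :=
  fun x => f (Function.update x i true) - f (Function.update x i false)

/-- Character `χ_S(x) = (-1)^{∑_{i ∈ S} x_i}`. -/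
noncomputable def chi (n : ℕ) (S : Finset (Fin n)) (x : Fin n → Bool) : ℝ :=
  ∏ i ∈ S, (if x i then (-1 : ℝ) else 1)

/-- Fourier--Walsh coefficient `f̂(S) = E[f · χ_S]`. -/
noncomputable def fhat (n : ℕ) (f : (Fin n → Bool) → ℝ) (S : Finset (Fin n)) : ℝ :=
  Ev n (fun x => f x * chi n S x)

/-- Heat semigroup `P_t f = ∑_S e^{-t|S|} f̂(S) χ_S`. -/
noncomputable def heat (n : ℕ) (t : ℝ) (f : (Fin n → Bool) → ℝ) :
    (Fin n → Bool) → ℝ :=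
  fun x => ∑ S : Finset (Fin n), Real.exp (-(t * S.card)) * fhat n f S * chi n S x

/-- Influence of coordinate `i` on a Boolean (`{0,1}`-valued) function:
`Inf_i[f] = P[f(x) ≠ f(x ⊕ e_i)]`. -/
noncomputable def InfB (n : ℕ) (i : Fin n) (f : (Fin n → Bool) → ℝ) : ℝ :=
  Ev n (fun x => if f x = f (Function.update x i (! x i)) then 0 else 1)

/-- `L¹`-influence `Inf_i^{(1)}[f] = E[|∂_i f|]`. -/
noncomputable def Inf1 (n : ℕ) (i : Fin n) (f : (Fin n → Bool) → ℝ) : ℝ :=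
  Ev n (fun x => |pD n i f x|)

/-- `L²`-influence `Inf_i[f] = E[|∂_i f|²]` for real-valued `f`. -/
noncomputable def Inf2 (n : ℕ) (i : Fin n) (f : (Fin n → Bool) → ℝ) : ℝ :=
  Ev n (fun x => |pD n i f x| ^ 2)

/-- Difference operator `D_i f (x) = f(x) - f(x ⊕ e_i)`. -/
noncomputable def Dop (n : ℕ) (i : Fin n) (f : (Fin n → Bool) → ℝ) :
    (Fin n → Bool) → ℝ :=
  fun x => f x - f (Function.update x i (! x i))

/-- `‖f‖_p = (E[|f|^p])^{1/p}` (also used as a quasi-norm for `0 < p < 1`). -/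
noncomputable def nrm (n : ℕ) (p : ℝ) (f : (Fin n → Bool) → ℝ) : ℝ :=
  (Ev n (fun x => |f x| ^ p)) ^ (1 / p)

/-- Iterated discrete derivative along a list of coordinates. -/
noncomputable def pDList (n : ℕ) : List (Fin n) → ((Fin n → Bool) → ℝ) → ((Fin n → Bool) → ℝ)
  | [], f => f
  | i :: l, f => pD n i (pDList n l f)

/-- `∂_T f = ∂_{i₁} ∘ ⋯ ∘ ∂_{i_d} f` for `T = {i₁ < ⋯ < i_d}` (the order is immaterial
since discrete derivatives along distinct coordinates commute). -/
noncomputable def pDT (n : ℕ) (T : Finset (Fin n)) (f : (Fin n → Bool) → ℝ) :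
    (Fin n → Bool) → ℝ :=
  pDList n (T.sort (· ≤ ·)) f

lemma sumFlip (n : ℕ) (i : Fin n) (H : (Fin n → Bool) → ℝ) :
    ∑ x : Fin n → Bool, H (Function.update x i (!x i)) = ∑ x : Fin n → Bool, H x := by
  apply Fintype.sum_bijective (fun x => Function.update x i (!x i))
  · have : Function.Involutive (fun x : Fin n → Bool => Function.update x i (!x i)) := by
      intro x; simp [Function.update_idem]
    exact this.bijective
  · intro x; rfl

lemma sum_update_add (n : ℕ) (i : Fin n) (H : (Fin n → Bool) → ℝ) :
    (∑ x : Fin n → Bool, H (Function.update x i true))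
      + ∑ x : Fin n → Bool, H (Function.update x i false)
    = 2 * ∑ x : Fin n → Bool, H x := by
  rw [← Finset.sum_add_distrib]
  have : ∀ x : Fin n → Bool,
      H (Function.update x i true) + H (Function.update x i false)
        = H x + H (Function.update x i (!x i)) := by
    intro x
    cases h : x i
    · have hx : Function.update x i false = x := by rw [← h]; exact Function.update_eq_self i x
      simp [h, hx, add_comm]
    · have hx : Function.update x i true = x := by rw [← h]; exact Function.update_eq_self i x
      simp [h, hx]
  rw [Finset.sum_congr rfl (fun x _ => this x), Finset.sum_add_distrib, sumFlip, two_mul]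

lemma chi_update_not_mem (n : ℕ) (S : Finset (Fin n)) (i : Fin n) (hi : i ∉ S)
    (x : Fin n → Bool) (b : Bool) : chi n S (Function.update x i b) = chi n S x := by
  unfold chi
  exact Finset.prod_congr rfl fun j hj => by
    rw [Function.update_of_ne (by rintro rfl; exact hi hj)]

lemma chi_insert (n : ℕ) (S : Finset (Fin n)) (i : Fin n) (hi : i ∉ S) (x : Fin n → Bool) :
    chi n (insert i S) x = (if x i then (-1:ℝ) else 1) * chi n S x := by
  unfold chi; rw [Finset.prod_insert hi]

lemma fhat_pD_of_mem (n : ℕ) (i : Fin n) (S : Finset (Fin n)) (hi : i ∈ S)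
    (f : (Fin n → Bool) → ℝ) : fhat n (pD n i f) S = 0 := by
  have key : ∑ x : Fin n → Bool, pD n i f x * chi n S x = 0 := by
    have h1 : ∀ x : Fin n → Bool,
        pD n i f (Function.update x i (!x i)) * chi n S (Function.update x i (!x i))
          = -(pD n i f x * chi n S x) := by
      intro x
      have hS : S = insert i (S.erase i) := (Finset.insert_erase hi).symm
      have hpd : pD n i f (Function.update x i (!x i)) = pD n i f x := by
        unfold pD; rw [Function.update_idem, Function.update_idem]
      have hchi : chi n S (Function.update x i (!x i)) = -(chi n S x) := by
        rw [hS, chi_insert n _ i (Finset.notMem_erase i S),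
          chi_insert n _ i (Finset.notMem_erase i S),
          chi_update_not_mem n _ i (Finset.notMem_erase i S)]
        cases h : x i <;> simp [h]
      rw [hpd, hchi]; ring
    have := sumFlip n i (fun x => pD n i f x * chi n S x)
    rw [Finset.sum_congr rfl (fun x _ => h1 x), Finset.sum_neg_distrib] at this
    linarith
  unfold fhat Ev
  rw [key, zero_div]

lemma fhat_pD_of_not_mem (n : ℕ) (i : Fin n) (S : Finset (Fin n)) (hi : i ∉ S)
    (f : (Fin n → Bool) → ℝ) : fhat n (pD n i f) S = -2 * fhat n f (insert i S) := by
  have key : ∑ x : Fin n → Bool, pD n i f x * chi n S x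
      = -2 * ∑ x : Fin n → Bool, f x * chi n (insert i S) x := by
    have h1 : ∀ x : Fin n → Bool,
        pD n i f x * chi n S x
          = -((fun y => f y * chi n (insert i S) y) (Function.update x i true)
              + (fun y => f y * chi n (insert i S) y) (Function.update x i false)) := by
      intro x
      have ht : chi n (insert i S) (Function.update x i true)
          = -(chi n S x) := by
        rw [chi_insert n S i hi, chi_update_not_mem n S i hi]
        simp
      have hf : chi n (insert i S) (Function.update x i false)
          = chi n S x := by
        rw [chi_insert n S i hi, chi_update_not_mem n S i hi]
        simp
      simp only [pD, ht, hf]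
      ring
    rw [Finset.sum_congr rfl (fun x _ => h1 x), Finset.sum_neg_distrib,
      Finset.sum_add_distrib, sum_update_add n i (fun y => f y * chi n (insert i S) y)]
    ring
  unfold fhat Ev
  rw [key]; ring

lemma fhat_pDList (n : ℕ) (l : List (Fin n)) (hl : l.Nodup) (f : (Fin n → Bool) → ℝ)
    (S : Finset (Fin n)) :
    fhat n (pDList n l f) S
      = if ∀ i ∈ l, i ∉ S then (-2:ℝ) ^ l.length * fhat n f (S ∪ l.toFinset) else 0 := by
  induction l generalizing S with
  | nil => simp [pDList]
  | cons i l ih =>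
    rcases List.nodup_cons.mp hl with ⟨hil, hl'⟩
    by_cases hiS : i ∈ S
    · rw [show pDList n (i :: l) f = pD n i (pDList n l f) from rfl,
        fhat_pD_of_mem n i S hiS]
      simp [hiS]
    · rw [show pDList n (i :: l) f = pD n i (pDList n l f) from rfl,
        fhat_pD_of_not_mem n i S hiS, ih hl' (insert i S)]
      have hset : insert i S ∪ l.toFinset = S ∪ (i :: l).toFinset := by
        simp [Finset.insert_union, List.toFinset_cons, Finset.union_comm,
          Finset.union_insert]
      by_cases hall : ∀ j ∈ l, j ∉ S
      · have h2 : ∀ j ∈ l, j ∉ insert i S := by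
          intro j hj
          simp only [Finset.mem_insert, not_or]
          exact ⟨fun h => hil (h ▸ hj), hall j hj⟩
        have h3 : ∀ j ∈ i :: l, j ∉ S := by
          intro j hj
          rcases List.mem_cons.mp hj with rfl | hj
          · exact hiS
          · exact hall j hj
        rw [if_pos h2, if_pos h3, hset]
        simp [pow_succ]
        ring
      · have h2 : ¬ ∀ j ∈ l, j ∉ insert i S := by
          intro h
          exact hall fun j hj hjS => h j hj (Finset.mem_insert_of_mem hjS)
        have h3 : ¬ ∀ j ∈ i :: l, j ∉ S := by
          intro h
          exact hall fun j hj => h j (List.mem_cons_of_mem i hj)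
        rw [if_neg h2, if_neg h3, mul_zero]

lemma fhat_pDT (n : ℕ) (T : Finset (Fin n)) (f : (Fin n → Bool) → ℝ) (S : Finset (Fin n)) :
    fhat n (pDT n T f) S
      = if Disjoint S T then (-2:ℝ) ^ T.card * fhat n f (S ∪ T) else 0 := by
  unfold pDT
  rw [fhat_pDList n _ (Finset.sort_nodup T _) f S]
  have h1 : (∀ i ∈ T.sort (· ≤ ·), i ∉ S) ↔ Disjoint S T := by
    simp only [Finset.mem_sort]
    exact (Finset.disjoint_right).symm
  rw [Finset.length_sort, Finset.sort_toFinset]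
  by_cases h : Disjoint S T
  · rw [if_pos (h1.mpr h), if_pos h]
  · rw [if_neg (fun hc => h (h1.mp hc)), if_neg h]

lemma Ev_sum {ι : Type*} (s : Finset ι) (n : ℕ) (h : ι → (Fin n → Bool) → ℝ) :
    Ev n (fun x => ∑ i ∈ s, h i x) = ∑ i ∈ s, Ev n (h i) := by
  unfold Ev
  rw [Finset.sum_comm, Finset.sum_div]

lemma Ev_const_mul (n : ℕ) (c : ℝ) (h : (Fin n → Bool) → ℝ) :
    Ev n (fun x => c * h x) = c * Ev n h := by
  unfold Ev
  rw [← Finset.mul_sum, mul_div_assoc]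

lemma Ev_mul_heat (n : ℕ) (t : ℝ) (F G : (Fin n → Bool) → ℝ) :
    Ev n (fun x => F x * heat n t G x)
      = ∑ S : Finset (Fin n), Real.exp (-(t * S.card)) * fhat n G S * fhat n F S := by
  have h1 : ∀ x : Fin n → Bool, F x * heat n t G x
      = ∑ S : Finset (Fin n),
          Real.exp (-(t * S.card)) * fhat n G S * (F x * chi n S x) := by
    intro x
    unfold heat
    rw [Finset.mul_sum]
    exact Finset.sum_congr rfl fun S _ => by ring
  calc Ev n (fun x => F x * heat n t G x)
      = Ev n (fun x => ∑ S : Finset (Fin n),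
          Real.exp (-(t * S.card)) * fhat n G S * (F x * chi n S x)) := by
        exact congrArg (Ev n) (funext h1)
    _ = ∑ S : Finset (Fin n),
          Real.exp (-(t * S.card)) * fhat n G S * fhat n F S := by
        rw [Ev_sum]
        exact Finset.sum_congr rfl fun S _ => by
          rw [Ev_const_mul]; rfl

lemma integrable_aux (k : ℕ) (c : ℝ) (hc : 0 < c) :
    IntegrableOn (fun t : ℝ => (1 - Real.exp (-t)) ^ k * Real.exp (-(c * t)))
      (Set.Ioi 0) := by
  apply MeasureTheory.Integrable.mono' (exp_neg_integrableOn_Ioi 0 hc)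
  · apply Continuous.aestronglyMeasurable
    continuity
  · rw [MeasureTheory.ae_restrict_iff' measurableSet_Ioi]
    apply MeasureTheory.ae_of_all
    intro t ht
    have h1 : Real.exp (-t) ≤ 1 := Real.exp_le_one_iff.mpr (by linarith [Set.mem_Ioi.mp ht])
    have h2 : (0:ℝ) ≤ 1 - Real.exp (-t) := by linarith
    have h3 : (1 - Real.exp (-t)) ^ k ≤ 1 := pow_le_one₀ h2 (by linarith [Real.exp_pos (-t)])
    rw [Real.norm_eq_abs, abs_mul, abs_of_nonneg (pow_nonneg h2 k), abs_of_nonneg (Real.exp_pos _).le]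
    calc (1 - Real.exp (-t)) ^ k * Real.exp (-(c * t))
        ≤ 1 * Real.exp (-(c * t)) := by
          apply mul_le_mul_of_nonneg_right h3 (Real.exp_pos _).le
      _ = Real.exp (-c * t) := by rw [one_mul, neg_mul]

lemma integral_exp_base (c : ℝ) (hc : 0 < c) :
    ∫ t in Set.Ioi (0:ℝ), Real.exp (-(c * t)) = 1 / c := by
  have h := integral_comp_mul_left_Ioi (fun x => Real.exp (-x)) 0 hc
  simp only [mul_zero, integral_exp_neg_Ioi, neg_zero, Real.exp_zero, smul_eq_mul,
    mul_one] at h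
  rw [h, one_div]

lemma integral_aux (k : ℕ) : ∀ m : ℕ,
    ∫ t in Set.Ioi (0:ℝ), (1 - Real.exp (-t)) ^ k * Real.exp (-(((m:ℝ)+1) * t))
      = (k.factorial * m.factorial : ℝ) / ((k + m + 1).factorial) := by
  induction k with
  | zero =>
    intro m
    have hm : (0:ℝ) < (m:ℝ) + 1 := by positivity
    simp only [pow_zero, one_mul]
    rw [integral_exp_base _ hm]
    have h5 : ((0 + m + 1).factorial : ℝ) = ((m:ℝ)+1) * m.factorial := by
      rw [Nat.zero_add, Nat.factorial_succ]; push_cast; ring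
    rw [h5, Nat.factorial_zero]
    have h6 : (m.factorial : ℝ) ≠ 0 := by positivity
    field_simp
    simp
  | succ k ih =>
    intro m
    have hm : (0:ℝ) < (m:ℝ) + 1 := by positivity
    have hm2 : (0:ℝ) < (m:ℝ) + 2 := by positivity
    have key : ∀ t : ℝ, (1 - Real.exp (-t)) ^ (k+1) * Real.exp (-(((m:ℝ)+1) * t))
        = (1 - Real.exp (-t)) ^ k * Real.exp (-(((m:ℝ)+1) * t))
          - (1 - Real.exp (-t)) ^ k * Real.exp (-((((m:ℝ)+1)+1) * t)) := by
      intro t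
      have : Real.exp (-((((m:ℝ)+1)+1) * t)) = Real.exp (-t) * Real.exp (-(((m:ℝ)+1) * t)) := by
        rw [← Real.exp_add]; ring_nf
      rw [this, pow_succ]
      ring
    rw [MeasureTheory.setIntegral_congr_fun measurableSet_Ioi (fun t _ => key t),
      MeasureTheory.integral_sub (integrable_aux k _ hm) (integrable_aux k _ (by positivity))]
    have e1 : ((m:ℝ)+1)+1 = ((m+1 : ℕ) : ℝ) + 1 := by push_cast; ring
    rw [e1, ih m, ih (m+1)]
    have h1 : ((k + m + 1 + 1).factorial : ℝ) = (k + m + 2) * (k + m + 1).factorial := by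
      rw [show k + m + 1 + 1 = (k + m + 1) + 1 from rfl, Nat.factorial_succ]
      push_cast; ring
    have h2 : ((m + 1).factorial : ℝ) = (m + 1) * m.factorial := by
      rw [Nat.factorial_succ]; push_cast; ring
    have h3 : ((k + 1).factorial : ℝ) = (k + 1) * k.factorial := by
      rw [Nat.factorial_succ]; push_cast; ring
    have h4 : (k + (m+1) + 1) = k + m + 1 + 1 := by ring
    rw [h4, show k + 1 + m + 1 = k + m + 1 + 1 from by ring, h1, h2, h3]
    have hf1 : ((k + m + 1).factorial : ℝ) ≠ 0 := by positivity
    field_simp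
    ring

lemma Ev_pDT_heat (n d : ℕ) (f g : (Fin n → Bool) → ℝ) (T : Finset (Fin n))
    (hT : T.card = d) (t : ℝ) :
    Ev n (fun x => pDT n T f x * heat n t (pDT n T g) x)
      = ∑ S : Finset (Fin n), (if Disjoint S T then
          (4:ℝ)^d * (fhat n f (S ∪ T) * fhat n g (S ∪ T)) * Real.exp (-(t * S.card))
          else 0) := by
  rw [Ev_mul_heat]
  apply Finset.sum_congr rfl
  intro S _
  rw [fhat_pDT, fhat_pDT, hT]
  by_cases h : Disjoint S T
  · rw [if_pos h, if_pos h, if_pos h]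
    have : ((-2:ℝ))^d * ((-2:ℝ))^d = (4:ℝ)^d := by
      rw [← mul_pow]; norm_num
    rw [← this]; ring
  · rw [if_neg h, if_neg h, if_neg h]
    ring

lemma integral_T (n d : ℕ) (hd : 1 ≤ d) (f g : (Fin n → Bool) → ℝ) (T : Finset (Fin n))
    (hT : T.card = d) :
    ∫ t in Set.Ioi (0:ℝ), (1 - Real.exp (-t)) ^ (d - 1) * Real.exp (-t) *
        Ev n (fun x => pDT n T f x * heat n t (pDT n T g) x)
      = ∑ S : Finset (Fin n), (if Disjoint S T then
          (4:ℝ)^d * (fhat n f (S ∪ T) * fhat n g (S ∪ T)) *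
            (((d-1).factorial * S.card.factorial : ℝ) / ((d + S.card).factorial)) else 0) := by
  have key : ∀ t ∈ Set.Ioi (0:ℝ),
      (1 - Real.exp (-t)) ^ (d - 1) * Real.exp (-t) *
        Ev n (fun x => pDT n T f x * heat n t (pDT n T g) x)
      = ∑ S : Finset (Fin n), (if Disjoint S T then
          (4:ℝ)^d * (fhat n f (S ∪ T) * fhat n g (S ∪ T)) *
            ((1 - Real.exp (-t)) ^ (d - 1) * Real.exp (-((S.card : ℝ) + 1) * t)) else 0) := by
    intro t _
    rw [Ev_pDT_heat n d f g T hT t, Finset.mul_sum]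
    apply Finset.sum_congr rfl
    intro S _
    by_cases h : Disjoint S T
    · rw [if_pos h, if_pos h]
      have he : Real.exp (-t) * Real.exp (-(t * S.card)) = Real.exp (-((S.card : ℝ) + 1) * t) := by
        rw [← Real.exp_add]; ring_nf
      rw [← he]; ring
    · rw [if_neg h, if_neg h, mul_zero]
  rw [MeasureTheory.setIntegral_congr_fun measurableSet_Ioi key,
    MeasureTheory.integral_finset_sum]
  · apply Finset.sum_congr rfl
    intro S _
    by_cases h : Disjoint S T
    · simp only [if_pos h]
      rw [MeasureTheory.integral_const_mul]
      have := integral_aux (d-1) S.card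
      have e2 : ∀ t : ℝ, Real.exp (-((S.card : ℝ) + 1) * t) = Real.exp (-(((S.card : ℝ) + 1) * t)) := by
        intro t; rw [neg_mul]
      simp_rw [e2]
      have e3 : (d - 1) + S.card + 1 = d + S.card := by omega
      rw [e3] at this
      rw [this]
    · simp only [if_neg h]
      simp
  · intro S _
    by_cases h : Disjoint S T
    · simp only [if_pos h]
      apply MeasureTheory.Integrable.const_mul
      have e2 : ∀ t : ℝ, Real.exp (-((S.card : ℝ) + 1) * t) = Real.exp (-(((S.card : ℝ) + 1) * t)) := by
        intro t; rw [neg_mul]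
      simp_rw [e2]
      exact integrable_aux (d-1) _ (by positivity)
    · simp only [if_neg h]
      simp


/-- Heat-semigroup representation of the level-`≥ d` Fourier weight
via the iterated discrete derivatives `∂_T`, `|T| = d`. -/
theorem heat_semigroup_representation_level_d (n d : ℕ) (hd : 2 ≤ d)
    (f g : (Fin n → Bool) → ℝ) :
    ∑ S ∈ Finset.univ.filter (fun S : Finset (Fin n) => d ≤ S.card),
        fhat n f S * fhat n g S
    = ((d : ℝ) / 4 ^ d) *
        ∑ T ∈ Finset.univ.filter (fun T : Finset (Fin n) => T.card = d),
          ∫ t in Set.Ioi (0 : ℝ), (1 - Real.exp (-t)) ^ (d - 1) * Real.exp (-t) *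
            Ev n (fun x => pDT n T f x * heat n t (pDT n T g) x) := by
  classical
  have hd1 : 1 ≤ d := le_trans one_le_two hd
  have h4 : (4:ℝ)^d ≠ 0 := by positivity
  rw [Finset.sum_congr rfl
    (fun T hT => integral_T n d hd1 f g T (Finset.mem_filter.mp hT).2)]
  have step1 : ∀ T : Finset (Fin n),
      (∑ S : Finset (Fin n), if Disjoint S T then
          (4:ℝ)^d * (fhat n f (S ∪ T) * fhat n g (S ∪ T)) *
            (((d-1).factorial * S.card.factorial : ℝ) / ((d + S.card).factorial)) else 0)
      = ∑ S ∈ Finset.univ.filter (fun S : Finset (Fin n) => Disjoint S T),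
          (4:ℝ)^d * (fhat n f (S ∪ T) * fhat n g (S ∪ T)) *
            (((d-1).factorial * S.card.factorial : ℝ) / ((d + S.card).factorial)) := by
    intro T; rw [Finset.sum_filter]
  rw [Finset.sum_congr rfl (fun T _ => step1 T)]
  rw [Finset.sum_sigma']
  have step2 :
      ∑ p ∈ (Finset.univ.filter (fun T : Finset (Fin n) => T.card = d)).sigma
          (fun T => Finset.univ.filter (fun S : Finset (Fin n) => Disjoint S T)),
        (4:ℝ)^d * (fhat n f (p.2 ∪ p.1) * fhat n g (p.2 ∪ p.1)) *
          (((d-1).factorial * p.2.card.factorial : ℝ) / ((d + p.2.card).factorial))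
      = ∑ p ∈ (Finset.univ : Finset (Finset (Fin n))).sigma
          (fun U => U.powersetCard d),
        (4:ℝ)^d * (fhat n f p.1 * fhat n g p.1) *
          (((d-1).factorial * (p.1.card - d).factorial : ℝ) / ((d + (p.1.card - d)).factorial)) := by
    apply Finset.sum_nbij' (i := fun p => (⟨p.2 ∪ p.1, p.1⟩ : Σ _ : Finset (Fin n), Finset (Fin n)))
      (j := fun p => (⟨p.2, p.1 \ p.2⟩ : Σ _ : Finset (Fin n), Finset (Fin n)))
    · rintro ⟨T, S⟩ hp
      simp only [Finset.mem_sigma, Finset.mem_filter, Finset.mem_univ, true_and] at hp ⊢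
      exact Finset.mem_powersetCard.mpr ⟨Finset.subset_union_right, hp.1⟩
    · rintro ⟨U, T⟩ hp
      simp only [Finset.mem_sigma, Finset.mem_filter, Finset.mem_univ, true_and] at hp ⊢
      rcases Finset.mem_powersetCard.mp hp with ⟨hsub, hcard⟩
      exact ⟨hcard, Finset.sdiff_disjoint⟩
    · rintro ⟨T, S⟩ hp
      simp only [Finset.mem_sigma, Finset.mem_filter, Finset.mem_univ, true_and] at hp
      have : (S ∪ T) \ T = S := Finset.union_sdiff_cancel_right hp.2
      simp [this]
    · rintro ⟨U, T⟩ hp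
      simp only [Finset.mem_sigma, Finset.mem_filter, Finset.mem_univ, true_and] at hp
      rcases Finset.mem_powersetCard.mp hp with ⟨hsub, hcard⟩
      have : U \ T ∪ T = U := Finset.sdiff_union_of_subset hsub
      simp [this]
    · rintro ⟨T, S⟩ hp
      simp only [Finset.mem_sigma, Finset.mem_filter, Finset.mem_univ, true_and] at hp
      have hcard : (S ∪ T).card = S.card + d := by
        rw [Finset.card_union_of_disjoint hp.2, hp.1]
      have h2 : S.card + d - d = S.card := by omega
      rw [hcard, h2]
  rw [step2, Finset.sum_sigma]
  have step3 : ∀ U : Finset (Fin n),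
      (∑ T ∈ U.powersetCard d,
        (4:ℝ)^d * (fhat n f U * fhat n g U) *
          (((d-1).factorial * (U.card - d).factorial : ℝ) / ((d + (U.card - d)).factorial)))
      = (U.card.choose d : ℝ) * ((4:ℝ)^d * (fhat n f U * fhat n g U) *
          (((d-1).factorial * (U.card - d).factorial : ℝ) / ((d + (U.card - d)).factorial))) := by
    intro U
    rw [Finset.sum_const, Finset.card_powersetCard, nsmul_eq_mul]
  rw [Finset.sum_congr rfl (fun U _ => step3 U), Finset.mul_sum]
  rw [Finset.sum_filter]
  apply Finset.sum_congr rfl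
  intro U _
  by_cases hU : d ≤ U.card
  · rw [if_pos hU]
    have hdd : d + (U.card - d) = U.card := by omega
    have hnat : (U.card.choose d) * d.factorial * (U.card - d).factorial = U.card.factorial :=
      Nat.choose_mul_factorial_mul_factorial hU
    have hdf : d * (d-1).factorial = d.factorial := Nat.mul_factorial_pred (by omega)
    have hfu : ((U.card.factorial : ℝ)) ≠ 0 := by positivity
    have hnat2 : (U.card.choose d) * (d * (d-1).factorial) * (U.card - d).factorial
        = U.card.factorial := by rw [hdf]; exact hnat
    have hcast : (U.card.choose d : ℝ) * ((d:ℝ) * ((d-1).factorial : ℝ)) * ((U.card - d).factorial : ℝ)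
        = (U.card.factorial : ℝ) := by exact_mod_cast hnat2
    rw [hdd]
    field_simp
    linear_combination (-(fhat n f U * fhat n g U)) * hcast
  · rw [if_neg hU]
    have : U.card.choose d = 0 := Nat.choose_eq_zero_of_lt (by omega)
    rw [this]
    push_cast
    ring
end

section
/- Let f, g : {0,1}^n → ℝ. Then |E[fg] − E[f]E[g]| ≤ (1/4)·∑_{i=1}^n √(Inf_i[f]·Inf_i[g]), where Inf_i[h] = E[|h(x^{(i→1)}) − h(x^{(i→0)})|^2]. -/
open Finset MeasureTheory

-- kernel lemma
lemma chi_kernel (n : ℕ) (y z : Fin n → Bool) :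
    ∑ S : Finset (Fin n), chi n S y * chi n S z = if y = z then (2:ℝ)^n else 0 := by
  have h1 : ∀ S : Finset (Fin n), chi n S y * chi n S z =
      ∏ i ∈ S, ((if y i then (-1:ℝ) else 1) * (if z i then (-1:ℝ) else 1)) := by
    intro S; rw [chi, chi, ← Finset.prod_mul_distrib]
  simp only [h1]
  have h2 : ∑ S : Finset (Fin n), ∏ i ∈ S,
      ((if y i then (-1:ℝ) else 1) * (if z i then (-1:ℝ) else 1)) =
      ∏ i : Fin n, (((if y i then (-1:ℝ) else 1) * (if z i then (-1:ℝ) else 1)) + 1) := by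
    rw [Finset.prod_add]
    rw [Finset.powerset_univ]
    simp
  rw [h2]
  by_cases h : y = z
  · subst h
    simp only [if_pos rfl]
    have : ∀ i : Fin n, ((if y i then (-1:ℝ) else 1) * (if y i then (-1:ℝ) else 1)) + 1 = 2 := by
      intro i; by_cases hy : y i <;> simp [hy] <;> norm_num
    rw [Finset.prod_congr rfl (fun i _ => this i)]
    simp
  · rw [if_neg h]
    obtain ⟨i, hi⟩ : ∃ i, y i ≠ z i := by
      by_contra hc; push_neg at hc; exact h (funext hc)
    apply Finset.prod_eq_zero (Finset.mem_univ i)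
    cases hy : y i <;> cases hz : z i <;> simp [hy, hz] at hi ⊢

lemma plancherel (n : ℕ) (f g : (Fin n → Bool) → ℝ) :
    ∑ S : Finset (Fin n), fhat n f S * fhat n g S = Ev n (fun x => f x * g x) := by
  unfold fhat Ev
  simp only [div_mul_div_comm]
  rw [← Finset.sum_div]
  have key : ∑ S : Finset (Fin n), (∑ x : Fin n → Bool, f x * chi n S x) *
      (∑ x : Fin n → Bool, g x * chi n S x) =
      (∑ x : Fin n → Bool, f x * g x) * 2 ^ n := by
    have h1 : ∀ S : Finset (Fin n), (∑ x : Fin n → Bool, f x * chi n S x) *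
        (∑ x : Fin n → Bool, g x * chi n S x) =
        ∑ y : Fin n → Bool, ∑ z : Fin n → Bool,
          (f y * g z) * (chi n S y * chi n S z) := by
      intro S
      rw [Finset.sum_mul_sum]
      apply Finset.sum_congr rfl; intro y _
      apply Finset.sum_congr rfl; intro z _
      ring
    simp only [h1]
    rw [Finset.sum_comm]
    have h2 : ∀ y : Fin n → Bool, ∑ S : Finset (Fin n), ∑ z : Fin n → Bool,
        (f y * g z) * (chi n S y * chi n S z) = f y * g y * 2 ^ n := by
      intro y
      rw [Finset.sum_comm]
      have h3 : ∀ z : Fin n → Bool, ∑ S : Finset (Fin n),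
          (f y * g z) * (chi n S y * chi n S z) =
          (f y * g z) * (if y = z then (2:ℝ)^n else 0) := by
        intro z
        rw [← Finset.mul_sum, chi_kernel]
      simp only [h3]
      simp only [mul_ite, mul_zero]
      rw [Finset.sum_ite_eq (Finset.univ) y (fun z => f y * g z * 2 ^ n)]
      simp
    simp only [h2]
    rw [← Finset.sum_mul]
  rw [key]
  have h2n : ((2:ℝ)^n) ≠ 0 := by positivity
  field_simp

lemma flip_involutive (n : ℕ) (i : Fin n) :
    Function.Involutive (fun x : Fin n → Bool => Function.update x i (!x i)) := by
  intro x
  simp only [Function.update_self]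
  ext j
  by_cases hj : j = i
  · subst hj; simp
  · simp [Function.update_of_ne hj]

lemma chi_flip (n : ℕ) (i : Fin n) (S : Finset (Fin n)) (x : Fin n → Bool) :
    chi n S (Function.update x i (!x i)) = (if i ∈ S then (-1:ℝ) else 1) * chi n S x := by
  by_cases hi : i ∈ S
  · rw [if_pos hi, chi, chi]
    rw [← Finset.mul_prod_erase S _ hi, ← Finset.mul_prod_erase S _ hi]
    have hrest : ∏ j ∈ S.erase i, (if Function.update x i (!x i) j then (-1:ℝ) else 1)
        = ∏ j ∈ S.erase i, (if x j then (-1:ℝ) else 1) := by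
      apply Finset.prod_congr rfl
      intro j hj
      rw [Function.update_of_ne (Finset.ne_of_mem_erase hj)]
    rw [hrest, Function.update_self]
    cases hx : x i <;> simp <;> ring
  · rw [if_neg hi, one_mul, chi, chi]
    apply Finset.prod_congr rfl
    intro j hj
    rw [Function.update_of_ne (by rintro rfl; exact hi hj)]

lemma fhat_flip (n : ℕ) (i : Fin n) (f : (Fin n → Bool) → ℝ) (S : Finset (Fin n)) :
    fhat n (fun x => f (Function.update x i (!x i))) S
      = (if i ∈ S then (-1:ℝ) else 1) * fhat n f S := by
  unfold fhat Ev
  rw [mul_div_assoc']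
  congr 1
  rw [Finset.mul_sum]
  have hbij := (flip_involutive n i).bijective
  rw [Fintype.sum_bijective _ hbij
    (fun x => f (Function.update x i (!x i)) * chi n S x)
    (fun y => (if i ∈ S then (-1:ℝ) else 1) * (f y * chi n S y))]
  intro x
  rw [chi_flip n i S x]
  by_cases hi : i ∈ S <;> simp [hi] <;> ring

lemma fhat_sub (n : ℕ) (f g : (Fin n → Bool) → ℝ) (S : Finset (Fin n)) :
    fhat n (fun x => f x - g x) S = fhat n f S - fhat n g S := by
  unfold fhat Ev
  rw [← sub_div, ← Finset.sum_sub_distrib]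
  congr 1
  apply Finset.sum_congr rfl
  intro x _
  ring

lemma pD_mul_eq (n : ℕ) (i : Fin n) (f g : (Fin n → Bool) → ℝ) (x : Fin n → Bool) :
    pD n i f x * pD n i g x =
      (f x - f (Function.update x i (!x i))) * (g x - g (Function.update x i (!x i))) := by
  unfold pD
  cases hx : x i <;> simp only [Bool.not_false, Bool.not_true]
  · have h1 : Function.update x i false = x := by
      rw [← hx]; exact Function.update_eq_self i x
    rw [h1]; ring
  · have h1 : Function.update x i true = x := by
      rw [← hx]; exact Function.update_eq_self i x
    rw [h1]

lemma Ev_pD_mul (n : ℕ) (i : Fin n) (f g : (Fin n → Bool) → ℝ) :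
    Ev n (fun x => pD n i f x * pD n i g x) =
      ∑ S ∈ Finset.univ.filter (fun S : Finset (Fin n) => i ∈ S),
        4 * (fhat n f S * fhat n g S) := by
  have h1 : Ev n (fun x => pD n i f x * pD n i g x) =
      Ev n (fun x => (f x - f (Function.update x i (!x i))) *
        (g x - g (Function.update x i (!x i)))) := by
    unfold Ev; congr 1; exact Finset.sum_congr rfl (fun x _ => pD_mul_eq n i f g x)
  rw [h1, ← plancherel]
  rw [Finset.sum_filter]
  apply Finset.sum_congr rfl
  intro S _
  rw [fhat_sub n f _ S, fhat_sub n g _ S, fhat_flip, fhat_flip]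
  by_cases hi : i ∈ S <;> simp [hi] <;> ring

lemma Inf2_eq (n : ℕ) (i : Fin n) (f : (Fin n → Bool) → ℝ) :
    Inf2 n i f = ∑ S ∈ Finset.univ.filter (fun S : Finset (Fin n) => i ∈ S),
        4 * (fhat n f S)^2 := by
  have h1 : Inf2 n i f = Ev n (fun x => pD n i f x * pD n i f x) := by
    unfold Inf2 Ev
    congr 1
    apply Finset.sum_congr rfl
    intro x _
    show |pD n i f x| ^ 2 = pD n i f x * pD n i f x
    rw [sq_abs]; ring
  rw [h1, Ev_pD_mul]
  apply Finset.sum_congr rfl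
  intro S _
  ring

lemma chi_empty (n : ℕ) (x : Fin n → Bool) : chi n ∅ x = 1 := by
  simp [chi]

lemma cov_eq (n : ℕ) (f g : (Fin n → Bool) → ℝ) :
    Ev n (fun x => f x * g x) - Ev n f * Ev n g =
      ∑ S ∈ Finset.univ.erase (∅ : Finset (Fin n)), fhat n f S * fhat n g S := by
  have hf : Ev n f = fhat n f ∅ := by
    unfold fhat; congr 1; funext x; rw [chi_empty, mul_one]
  have hg : Ev n g = fhat n g ∅ := by
    unfold fhat; congr 1; funext x; rw [chi_empty, mul_one]
  rw [hf, hg, ← plancherel]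
  rw [← Finset.sum_erase_add Finset.univ _ (Finset.mem_univ (∅ : Finset (Fin n)))]
  ring

/-- Two-function Poincaré inequality:
`|E[fg] − E[f]E[g]| ≤ (1/4) ∑_i √(Inf_i[f]·Inf_i[g])`. -/
theorem two_function_poincare (n : ℕ) (f g : (Fin n → Bool) → ℝ) :
    |Ev n (fun x => f x * g x) - Ev n f * Ev n g| ≤
      (1 / 4) * ∑ i : Fin n, Real.sqrt (Inf2 n i f * Inf2 n i g) := by
  rw [cov_eq]
  have step1 : |∑ S ∈ Finset.univ.erase (∅ : Finset (Fin n)), fhat n f S * fhat n g S|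
      ≤ ∑ S ∈ Finset.univ.erase (∅ : Finset (Fin n)), |fhat n f S| * |fhat n g S| := by
    refine (Finset.abs_sum_le_sum_abs _ _).trans ?_
    apply le_of_eq
    exact Finset.sum_congr rfl (fun S _ => abs_mul _ _)
  refine step1.trans ?_
  have step2 : ∑ S ∈ Finset.univ.erase (∅ : Finset (Fin n)), |fhat n f S| * |fhat n g S|
      ≤ ∑ S ∈ Finset.univ.erase (∅ : Finset (Fin n)),
          ∑ i : Fin n, (if i ∈ S then |fhat n f S| * |fhat n g S| else 0) := by
    apply Finset.sum_le_sum
    intro S hS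
    obtain ⟨i, hi⟩ := Finset.nonempty_iff_ne_empty.2 (Finset.ne_of_mem_erase hS)
    calc |fhat n f S| * |fhat n g S|
        = (if i ∈ S then |fhat n f S| * |fhat n g S| else 0) := by rw [if_pos hi]
      _ ≤ ∑ j : Fin n, (if j ∈ S then |fhat n f S| * |fhat n g S| else 0) := by
          apply Finset.single_le_sum (f := fun j => if j ∈ S then |fhat n f S| * |fhat n g S| else 0)
          · intro j _
            split <;> positivity
          · exact Finset.mem_univ i
  refine step2.trans ?_
  rw [Finset.sum_comm]
  rw [Finset.mul_sum]
  apply Finset.sum_le_sum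
  intro i _
  have step3 : ∑ S ∈ Finset.univ.erase (∅ : Finset (Fin n)),
      (if i ∈ S then |fhat n f S| * |fhat n g S| else 0)
      ≤ ∑ S ∈ Finset.univ.filter (fun S : Finset (Fin n) => i ∈ S),
          |fhat n f S| * |fhat n g S| := by
    rw [← Finset.sum_filter]
    apply Finset.sum_le_sum_of_subset_of_nonneg
    · intro S hS
      simp only [Finset.mem_filter, Finset.mem_erase, Finset.mem_univ, true_and] at hS ⊢
      exact hS.2
    · intro S _ _; positivity
  refine step3.trans ?_
  have cs := Real.sum_mul_le_sqrt_mul_sqrt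
    (Finset.univ.filter (fun S : Finset (Fin n) => i ∈ S))
    (fun S => |fhat n f S|) (fun S => |fhat n g S|)
  simp only [sq_abs] at cs
  refine cs.trans ?_
  -- now show √(∑ f̂²) * √(∑ ĝ²) = (1/4) √(Inf2 f * Inf2 g)
  set A := ∑ S ∈ Finset.univ.filter (fun S : Finset (Fin n) => i ∈ S), (fhat n f S)^2 with hA
  set B := ∑ S ∈ Finset.univ.filter (fun S : Finset (Fin n) => i ∈ S), (fhat n g S)^2 with hB
  have hA0 : 0 ≤ A := Finset.sum_nonneg (fun S _ => sq_nonneg _)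
  have hB0 : 0 ≤ B := Finset.sum_nonneg (fun S _ => sq_nonneg _)
  have hIf : Inf2 n i f = 4 * A := by rw [Inf2_eq, hA, Finset.mul_sum]
  have hIg : Inf2 n i g = 4 * B := by rw [Inf2_eq, hB, Finset.mul_sum]
  rw [hIf, hIg]
  have : (4:ℝ) * A * (4 * B) = 16 * (A * B) := by ring
  rw [this]
  rw [show (16:ℝ) = 4^2 by norm_num, Real.sqrt_mul (by positivity), Real.sqrt_sq (by norm_num)]
  rw [Real.sqrt_mul hA0]
  ring_nf
  apply le_of_eq
  ring
end
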